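/- Let Ω ⊆ ℝ^d be open, let δ > 0 with ∂Ω ∩ B(0,δ) ≠ ∅, and let v₁, v₂ ∈ S^{d−1} both be good directions for Ω at 0 at scale δ. Let λ ∈ (0,1) and set w = ((1−λ)v₁ + λv₂)/|(1−λ)v₁ + λv₂|. Suppose y ∈ Π(0,w) ∩ B(0,δ) is such that ∂Ω ∩ (y + ℝ·w) ∩ B(0,δ) ≠ ∅. Then there exists t(y) ∈ ℝ such that ∂Ω ∩ (y + ℝ·w) ∩ B(0,δ) = {y + t(y)·w}, Ω ∩ (y + ℝ·w) ∩ B(0,δ) = {y + t·w : t > t(y)} ∩ B(0,δ), and (ℝ^d \ cl(Ω)) ∩ (y + ℝ·w) ∩ B(0,δ) = {y + t·w : t < t(y)} ∩ B(0,δ). -/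

import Mathlib

open Metric Set
open scoped RealInnerProductSpace

/-- `v` is a good direction for `Ω` at `x₀` at scale `δ`: `v` is a unit vector and there is a
continuous function `g` on the hyperplane `Π(x₀,v) = {x | ⟪x - x₀, v⟫ = 0}` such that
`Ω ∩ B(x₀,δ)` is the open region above the graph of `g` and `∂Ω ∩ B(x₀,δ)` is the graph of `g`,
in the direction `v`.  Here `x - ⟪x - x₀, v⟫ • v` is the orthogonal projection of `x` onto
`Π(x₀,v)`. -/
def IsGoodDirection {d : ℕ} (Ω : Set (EuclideanSpace ℝ (Fin d)))
    (x₀ : EuclideanSpace ℝ (Fin d)) (δ : ℝ) (v : EuclideanSpace ℝ (Fin d)) : Prop :=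
  ‖v‖ = 1 ∧ ∃ g : EuclideanSpace ℝ (Fin d) → ℝ,
    ContinuousOn g {x | ⟪x - x₀, v⟫ = 0} ∧
    Ω ∩ ball x₀ δ = {x ∈ ball x₀ δ | g (x - ⟪x - x₀, v⟫ • v) < ⟪x - x₀, v⟫} ∧
    frontier Ω ∩ ball x₀ δ = {x ∈ ball x₀ δ | g (x - ⟪x - x₀, v⟫ • v) = ⟪x - x₀, v⟫}

lemma up_step {d : ℕ} {Ω : Set (EuclideanSpace ℝ (Fin d))} {δ : ℝ}
    {v : EuclideanSpace ℝ (Fin d)} (h : IsGoodDirection Ω 0 δ v)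
    {x : EuclideanSpace ℝ (Fin d)} (hx : x ∈ closure Ω)
    (hxB : x ∈ ball (0 : EuclideanSpace ℝ (Fin d)) δ) {s : ℝ} (hs : 0 < s)
    (hB : x + s • v ∈ ball (0 : EuclideanSpace ℝ (Fin d)) δ) : x + s • v ∈ Ω := by
  obtain ⟨hv, g, hg, hΩeq, hFeq⟩ := h
  have hvv : ⟪v, v⟫ = 1 := by
    rw [real_inner_self_eq_norm_mul_norm, hv]; norm_num
  have hip : ⟪x + s • v - 0, v⟫ = ⟪x - 0, v⟫ + s := by
    have he : x + s • v - 0 = (x - 0) + s • v := by abel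
    rw [he, inner_add_left, real_inner_smul_left, hvv, mul_one]
  have hproj : (x + s • v) - ⟪x + s • v - 0, v⟫ • v = x - ⟪x - 0, v⟫ • v := by
    rw [hip]; module
  have hle : g (x - ⟪x - 0, v⟫ • v) ≤ ⟪x - 0, v⟫ := by
    by_cases hxΩ : x ∈ Ω
    · have hmem : x ∈ Ω ∩ ball 0 δ := ⟨hxΩ, hxB⟩
      rw [hΩeq] at hmem; exact hmem.2.le
    · have hxf : x ∈ frontier Ω := ⟨hx, fun h' => hxΩ (interior_subset h')⟩
      have hmem : x ∈ frontier Ω ∩ ball 0 δ := ⟨hxf, hxB⟩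
      rw [hFeq] at hmem; exact hmem.2.le
  have : x + s • v ∈ Ω ∩ ball 0 δ := by
    rw [hΩeq]
    refine ⟨hB, ?_⟩
    rw [hproj, hip]
    linarith
  exact this.1

lemma down_step {d : ℕ} {Ω : Set (EuclideanSpace ℝ (Fin d))} {δ : ℝ}
    {v : EuclideanSpace ℝ (Fin d)} (h : IsGoodDirection Ω 0 δ v)
    {x : EuclideanSpace ℝ (Fin d)} (hx : x ∉ Ω)
    (hxB : x ∈ ball (0 : EuclideanSpace ℝ (Fin d)) δ) {s : ℝ} (hs : 0 < s)
    (hB : x - s • v ∈ ball (0 : EuclideanSpace ℝ (Fin d)) δ) : x - s • v ∉ closure Ω := by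
  obtain ⟨hv, g, hg, hΩeq, hFeq⟩ := h
  have hvv : ⟪v, v⟫ = 1 := by
    rw [real_inner_self_eq_norm_mul_norm, hv]; norm_num
  have hip : ⟪x - s • v - 0, v⟫ = ⟪x - 0, v⟫ - s := by
    have he : x - s • v - 0 = (x - 0) - s • v := by abel
    rw [he, inner_sub_left, real_inner_smul_left, hvv, mul_one]
  have hproj : (x - s • v) - ⟪x - s • v - 0, v⟫ • v = x - ⟪x - 0, v⟫ • v := by
    rw [hip]; module
  have hge : ⟪x - 0, v⟫ ≤ g (x - ⟪x - 0, v⟫ • v) := by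
    by_contra hlt
    push_neg at hlt
    have : x ∈ Ω ∩ ball 0 δ := by rw [hΩeq]; exact ⟨hxB, hlt⟩
    exact hx this.1
  intro hcl
  have hle : g ((x - s • v) - ⟪x - s • v - 0, v⟫ • v) ≤ ⟪x - s • v - 0, v⟫ := by
    by_cases hΩ' : x - s • v ∈ Ω
    · have hmem : x - s • v ∈ Ω ∩ ball 0 δ := ⟨hΩ', hB⟩
      rw [hΩeq] at hmem; exact hmem.2.le
    · have hxf : x - s • v ∈ frontier Ω := ⟨hcl, fun h' => hΩ' (interior_subset h')⟩
      have hmem : x - s • v ∈ frontier Ω ∩ ball 0 δ := ⟨hxf, hB⟩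
      rw [hFeq] at hmem; exact hmem.2.le
  rw [hproj, hip] at hle
  linarith
lemma zigzag_up {d : ℕ} {Ω : Set (EuclideanSpace ℝ (Fin d))} {δ : ℝ}
    {v₁ v₂ : EuclideanSpace ℝ (Fin d)}
    (h₁ : IsGoodDirection Ω 0 δ v₁) (h₂ : IsGoodDirection Ω 0 δ v₂)
    {x : EuclideanSpace ℝ (Fin d)} {a b : ℝ} (ha : 0 < a) (hb : 0 < b)
    (hx : x ∈ closure Ω) (hxB : x ∈ ball (0 : EuclideanSpace ℝ (Fin d)) δ)
    (hzB : x + a • v₁ + b • v₂ ∈ ball (0 : EuclideanSpace ℝ (Fin d)) δ) :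
    x + a • v₁ + b • v₂ ∈ Ω := by
  set u : EuclideanSpace ℝ (Fin d) := a • v₁ + b • v₂ with hu
  have hz : x + a • v₁ + b • v₂ = x + u := by rw [hu]; abel
  rw [hz] at hzB ⊢
  rw [mem_ball_zero_iff] at hxB hzB
  set M : ℝ := max ‖x‖ ‖x + u‖ with hM
  have hMδ : M < δ := max_lt hxB hzB
  obtain ⟨n, hn⟩ := exists_nat_gt (a / (δ - M))
  have hd : 0 < δ - M := by linarith
  have hn0 : (0 : ℝ) < n := lt_of_le_of_lt (le_of_lt (div_pos ha hd)) hn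
  have han : a / n < δ - M := by
    rw [div_lt_iff₀ hn0]
    rw [div_lt_iff₀ hd] at hn
    linarith
  have hseg : ∀ θ : ℝ, 0 ≤ θ → θ ≤ 1 → ‖x + θ • u‖ ≤ M := by
    intro θ h0 h1
    have he : x + θ • u = (1 - θ) • x + θ • (x + u) := by module
    rw [he]
    calc ‖(1 - θ) • x + θ • (x + u)‖ ≤ ‖(1 - θ) • x‖ + ‖θ • (x + u)‖ := norm_add_le _ _
      _ = (1 - θ) * ‖x‖ + θ * ‖x + u‖ := by
          rw [norm_smul, norm_smul, Real.norm_eq_abs, Real.norm_eq_abs,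
            abs_of_nonneg (by linarith), abs_of_nonneg h0]
      _ ≤ (1 - θ) * M + θ * M := by
          have := le_max_left ‖x‖ ‖x + u‖
          have := le_max_right ‖x‖ ‖x + u‖
          have h1θ : (0:ℝ) ≤ 1 - θ := by linarith
          gcongr <;> simp [hM]
      _ = M := by ring
  have key : ∀ k : ℕ, k ≤ n →
      x + ((k : ℝ) / n) • u ∈ closure Ω ∧ (1 ≤ k → x + ((k : ℝ) / n) • u ∈ Ω) := by
    intro k
    induction k with
    | zero =>
        intro _
        refine ⟨by simpa using hx, by omega⟩
    | succ k ih =>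
        intro hkn
        obtain ⟨hp, -⟩ := ih (Nat.le_of_succ_le hkn)
        have hθ0 : (0 : ℝ) ≤ (k : ℝ) / n := by positivity
        have hθ1 : (k : ℝ) / n ≤ 1 := by
          rw [div_le_one hn0]
          exact_mod_cast Nat.le_of_succ_le hkn
        have hθ0' : (0 : ℝ) ≤ ((k : ℝ) + 1) / n := by positivity
        have hθ1' : ((k : ℝ) + 1) / n ≤ 1 := by
          rw [div_le_one hn0]
          exact_mod_cast hkn
        have hpB : x + ((k : ℝ) / n) • u ∈ ball (0 : EuclideanSpace ℝ (Fin d)) δ :=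
          mem_ball_zero_iff.2 (lt_of_le_of_lt (hseg _ hθ0 hθ1) hMδ)
        have hqB : (x + ((k : ℝ) / n) • u) + (a / n) • v₁ ∈ ball (0 : EuclideanSpace ℝ (Fin d)) δ := by
          rw [mem_ball_zero_iff]
          calc ‖(x + ((k : ℝ) / n) • u) + (a / n) • v₁‖
              ≤ ‖x + ((k : ℝ) / n) • u‖ + ‖(a / n) • v₁‖ := norm_add_le _ _
            _ ≤ M + a / n := by
                have h1 : ‖(a / n) • v₁‖ = a / n := by
                  rw [norm_smul, Real.norm_eq_abs, h₁.1, mul_one,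
                    abs_of_nonneg (le_of_lt (div_pos ha hn0))]
                rw [h1]
                exact add_le_add_left (hseg _ hθ0 hθ1) _
            _ < δ := by linarith
        have hqΩ : (x + ((k : ℝ) / n) • u) + (a / n) • v₁ ∈ Ω :=
          up_step h₁ hp hpB (div_pos ha hn0) hqB
        have hr_eq : ((x + ((k : ℝ) / n) • u) + (a / n) • v₁) + (b / n) • v₂
            = x + (((k : ℝ) + 1) / n) • u := by
          rw [hu]
          match_scalars <;> field_simp <;> ring
        have hrB : x + (((k : ℝ) + 1) / n) • u ∈ ball (0 : EuclideanSpace ℝ (Fin d)) δ :=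
          mem_ball_zero_iff.2 (lt_of_le_of_lt (hseg _ hθ0' hθ1') hMδ)
        have hrΩ : x + (((k : ℝ) + 1) / n) • u ∈ Ω := by
          rw [← hr_eq]
          exact up_step h₂ (subset_closure hqΩ) hqB (div_pos hb hn0) (hr_eq ▸ hrB)
        have hcast : ((k + 1 : ℕ) : ℝ) = (k : ℝ) + 1 := by push_cast; ring
        rw [hcast]
        exact ⟨subset_closure hrΩ, fun _ => hrΩ⟩
  have hnne : n ≠ 0 := by
    rintro rfl
    simp at hn0
  have hn1 : 1 ≤ n := Nat.one_le_iff_ne_zero.2 hnne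
  have := (key n le_rfl).2 hn1
  have hnn : ((n : ℝ) / n) = 1 := div_self (ne_of_gt hn0)
  rw [hnn, one_smul] at this
  exact this

lemma zigzag_down {d : ℕ} {Ω : Set (EuclideanSpace ℝ (Fin d))} {δ : ℝ}
    {v₁ v₂ : EuclideanSpace ℝ (Fin d)}
    (h₁ : IsGoodDirection Ω 0 δ v₁) (h₂ : IsGoodDirection Ω 0 δ v₂)
    {x : EuclideanSpace ℝ (Fin d)} {a b : ℝ} (ha : 0 < a) (hb : 0 < b)
    (hx : x ∉ Ω) (hxB : x ∈ ball (0 : EuclideanSpace ℝ (Fin d)) δ)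
    (hzB : x - a • v₁ - b • v₂ ∈ ball (0 : EuclideanSpace ℝ (Fin d)) δ) :
    x - a • v₁ - b • v₂ ∉ closure Ω := by
  set u : EuclideanSpace ℝ (Fin d) := a • v₁ + b • v₂ with hu
  have hz : x - a • v₁ - b • v₂ = x - u := by rw [hu]; abel
  rw [hz] at hzB ⊢
  rw [mem_ball_zero_iff] at hxB hzB
  set M : ℝ := max ‖x‖ ‖x - u‖ with hM
  have hMδ : M < δ := max_lt hxB hzB
  obtain ⟨n, hn⟩ := exists_nat_gt (a / (δ - M))
  have hd : 0 < δ - M := by linarith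
  have hn0 : (0 : ℝ) < n := lt_of_le_of_lt (le_of_lt (div_pos ha hd)) hn
  have han : a / n < δ - M := by
    rw [div_lt_iff₀ hn0]
    rw [div_lt_iff₀ hd] at hn
    linarith
  have hseg : ∀ θ : ℝ, 0 ≤ θ → θ ≤ 1 → ‖x - θ • u‖ ≤ M := by
    intro θ h0 h1
    have he : x - θ • u = (1 - θ) • x + θ • (x - u) := by module
    rw [he]
    calc ‖(1 - θ) • x + θ • (x - u)‖ ≤ ‖(1 - θ) • x‖ + ‖θ • (x - u)‖ := norm_add_le _ _
      _ = (1 - θ) * ‖x‖ + θ * ‖x - u‖ := by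
          rw [norm_smul, norm_smul, Real.norm_eq_abs, Real.norm_eq_abs,
            abs_of_nonneg (by linarith), abs_of_nonneg h0]
      _ ≤ (1 - θ) * M + θ * M := by
          have h1θ : (0:ℝ) ≤ 1 - θ := by linarith
          gcongr <;> simp [hM]
      _ = M := by ring
  have key : ∀ k : ℕ, k ≤ n →
      x - ((k : ℝ) / n) • u ∉ Ω ∧ (1 ≤ k → x - ((k : ℝ) / n) • u ∉ closure Ω) := by
    intro k
    induction k with
    | zero =>
        intro _
        refine ⟨by simpa using hx, by omega⟩
    | succ k ih =>
        intro hkn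
        obtain ⟨hp, -⟩ := ih (Nat.le_of_succ_le hkn)
        have hθ0 : (0 : ℝ) ≤ (k : ℝ) / n := by positivity
        have hθ1 : (k : ℝ) / n ≤ 1 := by
          rw [div_le_one hn0]
          exact_mod_cast Nat.le_of_succ_le hkn
        have hθ0' : (0 : ℝ) ≤ ((k : ℝ) + 1) / n := by positivity
        have hθ1' : ((k : ℝ) + 1) / n ≤ 1 := by
          rw [div_le_one hn0]
          exact_mod_cast hkn
        have hpB : x - ((k : ℝ) / n) • u ∈ ball (0 : EuclideanSpace ℝ (Fin d)) δ :=
          mem_ball_zero_iff.2 (lt_of_le_of_lt (hseg _ hθ0 hθ1) hMδ)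
        have hqB : (x - ((k : ℝ) / n) • u) - (a / n) • v₁ ∈ ball (0 : EuclideanSpace ℝ (Fin d)) δ := by
          rw [mem_ball_zero_iff]
          calc ‖(x - ((k : ℝ) / n) • u) - (a / n) • v₁‖
              ≤ ‖x - ((k : ℝ) / n) • u‖ + ‖(a / n) • v₁‖ := norm_sub_le _ _
            _ ≤ M + a / n := by
                have h1 : ‖(a / n) • v₁‖ = a / n := by
                  rw [norm_smul, Real.norm_eq_abs, h₁.1, mul_one,
                    abs_of_nonneg (le_of_lt (div_pos ha hn0))]
                rw [h1]
                exact add_le_add_left (hseg _ hθ0 hθ1) _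
            _ < δ := by linarith
        have hqnc : (x - ((k : ℝ) / n) • u) - (a / n) • v₁ ∉ closure Ω :=
          down_step h₁ hp hpB (div_pos ha hn0) hqB
        have hr_eq : ((x - ((k : ℝ) / n) • u) - (a / n) • v₁) - (b / n) • v₂
            = x - (((k : ℝ) + 1) / n) • u := by
          rw [hu]
          match_scalars <;> field_simp <;> ring
        have hrB : x - (((k : ℝ) + 1) / n) • u ∈ ball (0 : EuclideanSpace ℝ (Fin d)) δ :=
          mem_ball_zero_iff.2 (lt_of_le_of_lt (hseg _ hθ0' hθ1') hMδ)
        have hrnc : x - (((k : ℝ) + 1) / n) • u ∉ closure Ω := by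
          rw [← hr_eq]
          exact down_step h₂ (fun hmem => hqnc (subset_closure hmem)) hqB
            (div_pos hb hn0) (hr_eq ▸ hrB)
        have hcast : ((k + 1 : ℕ) : ℝ) = (k : ℝ) + 1 := by push_cast; ring
        rw [hcast]
        exact ⟨fun hmem => hrnc (subset_closure hmem), fun _ => hrnc⟩
  have hnne : n ≠ 0 := by
    rintro rfl
    simp at hn0
  have hn1 : 1 ≤ n := Nat.one_le_iff_ne_zero.2 hnne
  have := (key n le_rfl).2 hn1
  have hnn : ((n : ℝ) / n) = 1 := div_self (ne_of_gt hn0)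
  rw [hnn, one_smul] at this
  exact this
lemma comb_ne {d : ℕ} {Ω : Set (EuclideanSpace ℝ (Fin d))} (hΩ : IsOpen Ω) {δ : ℝ}
    (hne : (frontier Ω ∩ ball (0 : EuclideanSpace ℝ (Fin d)) δ).Nonempty)
    {v₁ v₂ : EuclideanSpace ℝ (Fin d)}
    (h₁ : IsGoodDirection Ω 0 δ v₁) (h₂ : IsGoodDirection Ω 0 δ v₂)
    {lam : ℝ} (hl0 : 0 < lam) (hl1 : lam < 1) :
    (1 - lam) • v₁ + lam • v₂ ≠ 0 := by
  intro h
  obtain ⟨x, hxF, hxB⟩ := hne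
  have hxB' := mem_ball_zero_iff.1 hxB
  set s : ℝ := (δ - ‖x‖) / 2 with hs
  have hs0 : 0 < s := by
    have : ‖x‖ < δ := hxB'
    rw [hs]; linarith
  have hmem : x + s • v₁ ∈ ball (0 : EuclideanSpace ℝ (Fin d)) δ := by
    rw [mem_ball_zero_iff]
    calc ‖x + s • v₁‖ ≤ ‖x‖ + ‖s • v₁‖ := norm_add_le _ _
      _ = ‖x‖ + s := by rw [norm_smul, Real.norm_eq_abs, h₁.1, mul_one, abs_of_nonneg hs0.le]
      _ < δ := by rw [hs]; linarith
  have hΩ1 : x + s • v₁ ∈ Ω := up_step h₁ (frontier_subset_closure hxF) hxB hs0 hmem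
  have h1l : (0:ℝ) < 1 - lam := by linarith
  have hkey : s • v₁ + (s * lam / (1 - lam)) • v₂
      = (s / (1 - lam)) • ((1 - lam) • v₁ + lam • v₂) := by
    match_scalars <;> field_simp
  rw [h, smul_zero] at hkey
  have heq : x + s • v₁ = x - (s * lam / (1 - lam)) • v₂ := by
    have hd : (x + s • v₁) - (x - (s * lam / (1 - lam)) • v₂)
        = s • v₁ + (s * lam / (1 - lam)) • v₂ := by abel
    have : (x + s • v₁) - (x - (s * lam / (1 - lam)) • v₂) = 0 := by rw [hd, hkey]
    exact sub_eq_zero.1 this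
  have hxnot : x ∉ Ω := by
    rw [hΩ.frontier_eq] at hxF
    exact hxF.2
  have hc0 : 0 < s * lam / (1 - lam) := by positivity
  have hnc : x - (s * lam / (1 - lam)) • v₂ ∉ closure Ω :=
    down_step h₂ hxnot hxB hc0 (heq ▸ hmem)
  exact hnc (heq ▸ subset_closure hΩ1)

/-- **Second claim in the proof of Lemma A.3**: with `w` a normalised convex combination of two
good directions `v₁, v₂` for `Ω` at `0` at scale `δ`, every line in the direction `w` through a
point `y` of the hyperplane `Π(0,w)` inside `B(0,δ)` that meets `∂Ω` inside `B(0,δ)` does so in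
exactly one point `y + t(y)w`, with `Ω` above and the complement of `cl(Ω)` below. -/
theorem goodDirections_convex_claim2 {d : ℕ} (Ω : Set (EuclideanSpace ℝ (Fin d)))
    (hΩ : IsOpen Ω) (δ : ℝ) (hδ : 0 < δ)
    (hne : (frontier Ω ∩ ball (0 : EuclideanSpace ℝ (Fin d)) δ).Nonempty)
    (v₁ v₂ : EuclideanSpace ℝ (Fin d))
    (h₁ : IsGoodDirection Ω 0 δ v₁) (h₂ : IsGoodDirection Ω 0 δ v₂)
    (lam : ℝ) (hlam : lam ∈ Set.Ioo (0 : ℝ) 1)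
    (w : EuclideanSpace ℝ (Fin d))
    (hw : w = ‖(1 - lam) • v₁ + lam • v₂‖⁻¹ • ((1 - lam) • v₁ + lam • v₂))
    (y : EuclideanSpace ℝ (Fin d)) (hyPlane : ⟪y, w⟫ = 0) (hyB : y ∈ ball (0 : EuclideanSpace ℝ (Fin d)) δ)
    (hyline : (frontier Ω ∩ {p | ∃ t : ℝ, p = y + t • w} ∩ ball 0 δ).Nonempty) :
    ∃ ty : ℝ,
      frontier Ω ∩ {p | ∃ t : ℝ, p = y + t • w} ∩ ball 0 δ = {y + ty • w} ∧
      Ω ∩ {p | ∃ t : ℝ, p = y + t • w} ∩ ball 0 δ =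
        {p | ∃ t : ℝ, ty < t ∧ p = y + t • w} ∩ ball 0 δ ∧
      (closure Ω)ᶜ ∩ {p | ∃ t : ℝ, p = y + t • w} ∩ ball 0 δ =
        {p | ∃ t : ℝ, t < ty ∧ p = y + t • w} ∩ ball 0 δ := by
  obtain ⟨hl0, hl1⟩ := hlam
  have hu_ne : (1 - lam) • v₁ + lam • v₂ ≠ 0 := comb_ne hΩ hne h₁ h₂ hl0 hl1
  set N : ℝ := ‖(1 - lam) • v₁ + lam • v₂‖ with hN
  have hN0 : 0 < N := norm_pos_iff.2 hu_ne
  have hwdecomp : ∀ t : ℝ, t • w = (t * N⁻¹ * (1 - lam)) • v₁ + (t * N⁻¹ * lam) • v₂ := by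
    intro t
    rw [hw]
    match_scalars <;> ring
  have up_w : ∀ x : EuclideanSpace ℝ (Fin d), x ∈ closure Ω →
      x ∈ ball (0 : EuclideanSpace ℝ (Fin d)) δ → ∀ t : ℝ, 0 < t →
      x + t • w ∈ ball (0 : EuclideanSpace ℝ (Fin d)) δ → x + t • w ∈ Ω := by
    intro x hx hxB t ht hB
    have h1l : (0:ℝ) < 1 - lam := by linarith
    have ha : 0 < t * N⁻¹ * (1 - lam) := by positivity
    have hb : 0 < t * N⁻¹ * lam := by positivity
    have he : x + t • w = x + (t * N⁻¹ * (1 - lam)) • v₁ + (t * N⁻¹ * lam) • v₂ := by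
      rw [hwdecomp t]; abel
    rw [he] at hB ⊢
    exact zigzag_up h₁ h₂ ha hb hx hxB hB
  have down_w : ∀ x : EuclideanSpace ℝ (Fin d), x ∉ Ω →
      x ∈ ball (0 : EuclideanSpace ℝ (Fin d)) δ → ∀ t : ℝ, 0 < t →
      x - t • w ∈ ball (0 : EuclideanSpace ℝ (Fin d)) δ → x - t • w ∉ closure Ω := by
    intro x hx hxB t ht hB
    have h1l : (0:ℝ) < 1 - lam := by linarith
    have ha : 0 < t * N⁻¹ * (1 - lam) := by positivity
    have hb : 0 < t * N⁻¹ * lam := by positivity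
    have he : x - t • w = x - (t * N⁻¹ * (1 - lam)) • v₁ - (t * N⁻¹ * lam) • v₂ := by
      rw [hwdecomp t]; abel
    rw [he] at hB ⊢
    exact zigzag_down h₁ h₂ ha hb hx hxB hB
  obtain ⟨p₀, ⟨hp₀F, hp₀line⟩, hp₀B⟩ := hyline
  obtain ⟨t₀, hp₀eq⟩ := hp₀line
  rw [hp₀eq] at hp₀F hp₀B
  have hx₀cl : y + t₀ • w ∈ closure Ω := frontier_subset_closure hp₀F
  have hx₀notΩ : y + t₀ • w ∉ Ω := by
    rw [hΩ.frontier_eq] at hp₀F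
    exact hp₀F.2
  have habove : ∀ t : ℝ, t₀ < t → y + t • w ∈ ball (0 : EuclideanSpace ℝ (Fin d)) δ →
      y + t • w ∈ Ω := by
    intro t ht hB
    have he : (y + t₀ • w) + (t - t₀) • w = y + t • w := by module
    rw [← he] at hB ⊢
    exact up_w _ hx₀cl hp₀B _ (by linarith) hB
  have hbelow : ∀ t : ℝ, t < t₀ → y + t • w ∈ ball (0 : EuclideanSpace ℝ (Fin d)) δ →
      y + t • w ∉ closure Ω := by
    intro t ht hB
    have he : (y + t₀ • w) - (t₀ - t) • w = y + t • w := by module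
    rw [← he] at hB ⊢
    exact down_w _ hx₀notΩ hp₀B _ (by linarith) hB
  refine ⟨t₀, ?_, ?_, ?_⟩
  · ext p
    simp only [mem_inter_iff, mem_setOf_eq, mem_singleton_iff]
    constructor
    · rintro ⟨⟨hpF, t, rfl⟩, hpB⟩
      rcases lt_trichotomy t t₀ with h | h | h
      · exact absurd (frontier_subset_closure hpF) (hbelow t h hpB)
      · rw [h]
      · have : y + t • w ∉ Ω := by
          rw [hΩ.frontier_eq] at hpF
          exact hpF.2
        exact absurd (habove t h hpB) this
    · rintro rfl
      exact ⟨⟨hp₀F, t₀, rfl⟩, hp₀B⟩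
  · ext p
    simp only [mem_inter_iff, mem_setOf_eq]
    constructor
    · rintro ⟨⟨hpΩ, t, rfl⟩, hpB⟩
      refine ⟨⟨t, ?_, rfl⟩, hpB⟩
      rcases lt_trichotomy t t₀ with h | h | h
      · exact absurd (subset_closure hpΩ) (hbelow t h hpB)
      · rw [h] at hpΩ
        exact absurd hpΩ hx₀notΩ
      · exact h
    · rintro ⟨⟨t, ht, rfl⟩, hpB⟩
      exact ⟨⟨habove t ht hpB, t, rfl⟩, hpB⟩
  · ext p
    simp only [mem_inter_iff, mem_setOf_eq, mem_compl_iff]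
    constructor
    · rintro ⟨⟨hpc, t, rfl⟩, hpB⟩
      refine ⟨⟨t, ?_, rfl⟩, hpB⟩
      rcases lt_trichotomy t t₀ with h | h | h
      · exact h
      · rw [h] at hpc
        exact absurd hx₀cl hpc
      · exact absurd (subset_closure (habove t h hpB)) hpc
    · rintro ⟨⟨t, ht, rfl⟩, hpB⟩
      exact ⟨⟨hbelow t ht hpB, t, rfl⟩, hpB⟩
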